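/- arXiv:2403.08922 — 2 statements merged into one kernel-verified Lean document; each statement's English description precedes it below -/
import Mathlib

section
/- Let A and B be anti-Hermitian matrices and p a positive integer. Define R_p(A,B) = ∫₀¹∫₀^{s₁}⋯∫₀^{s_{p-1}} e^{A(1-s₁)} B e^{A(s₁-s₂)} B ⋯ e^{A(s_{p-1}-s_p)} B e^{(A+B)s_p} ds_p ⋯ ds₁. Then ‖R_p(A,B)‖ ≤ ‖B‖^p / p!. -/
open scoped Matrix Matrix.Norms.L2Operator
open MeasureTheory NormedSpace

/-- The nested iterated integral from the high-order variation-of-parameters formula,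
ending with the full propagator `e^{(A+B)s}`:
`G A B 0 t = e^{(A+B)t}` and
`G A B (l+1) t = ∫₀ᵗ e^{A(t-s)} B (G A B l s) ds`, so that
`R_p(A,B) = G A B p 1` equals the `p`-fold iterated integral
`∫₀¹∫₀^{s₁}⋯∫₀^{s_{p-1}} e^{A(1-s₁)} B e^{A(s₁-s₂)} B ⋯ e^{A(s_{p-1}-s_p)} B e^{(A+B)s_p} ds_p⋯ds₁`. -/
noncomputable def remainderIntegral {N : ℕ} (A B : Matrix (Fin N) (Fin N) ℂ) :
    ℕ → ℝ → Matrix (Fin N) (Fin N) ℂ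
  | 0, t => exp (t • (A + B))
  | (l + 1), t => ∫ s in (0:ℝ)..t, exp ((t - s) • A) * B * remainderIntegral A B l s

lemma skew_smul_mem {N : ℕ} (M : Matrix (Fin N) (Fin N) ℂ) (hM : Mᴴ = -M) (r : ℝ) :
    r • M ∈ skewAdjoint (Matrix (Fin N) (Fin N) ℂ) := by
  rw [skewAdjoint.mem_iff]
  simp [Matrix.star_eq_conjTranspose, Matrix.conjTranspose_smul, hM]

lemma key {N : ℕ} (A B : Matrix (Fin N) (Fin N) ℂ)
    (hA : Aᴴ = -A) (hB : Bᴴ = -B) :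
    ∀ (l : ℕ) (t : ℝ), 0 ≤ t →
      ‖remainderIntegral A B l t‖ ≤ ‖B‖ ^ l * t ^ l / (Nat.factorial l) := by
  let +nondep : NormedAlgebra ℚ (Matrix (Fin N) (Fin N) ℂ) := .restrictScalars ℚ ℂ _
  intro l
  induction l with
  | zero =>
    intro t ht
    simp only [remainderIntegral, pow_zero, Nat.factorial_zero, Nat.cast_one, one_mul, div_one]
    have hU : exp (t • (A + B)) ∈ unitary (Matrix (Fin N) (Fin N) ℂ) :=
      exp_mem_unitary_of_mem_skewAdjoint
        (skew_smul_mem (A + B) (by simp [Matrix.conjTranspose_add, hA, hB]; abel) t)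
    rcases subsingleton_or_nontrivial (Matrix (Fin N) (Fin N) ℂ) with h | h
    · rw [Subsingleton.elim (exp (t • (A + B))) 0, norm_zero]; norm_num
    · rw [CStarRing.norm_of_mem_unitary hU]
  | succ l ih =>
    intro t ht
    have hfac : (0:ℝ) < Nat.factorial l := by positivity
    show ‖∫ s in (0:ℝ)..t, exp ((t - s) • A) * B * remainderIntegral A B l s‖ ≤ _
    have hg : IntervalIntegrable (fun s : ℝ => ‖B‖ ^ (l+1) * s ^ l / (Nat.factorial l))
        volume 0 t := (Continuous.intervalIntegrable (by continuity) 0 t)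
    have hbd : ∀ᵐ s ∂volume.restrict (Set.uIoc (0:ℝ) t),
        ‖exp ((t - s) • A) * B * remainderIntegral A B l s‖
          ≤ ‖B‖ ^ (l+1) * s ^ l / (Nat.factorial l) := by
      filter_upwards [ae_restrict_mem measurableSet_uIoc] with s hs
      rw [Set.uIoc_of_le ht] at hs
      have hU : exp ((t - s) • A) ∈ unitary (Matrix (Fin N) (Fin N) ℂ) :=
        exp_mem_unitary_of_mem_skewAdjoint (skew_smul_mem A hA (t - s))
      rw [mul_assoc, CStarRing.norm_mem_unitary_mul _ hU]
      calc ‖B * remainderIntegral A B l s‖ ≤ ‖B‖ * ‖remainderIntegral A B l s‖ := norm_mul_le _ _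
        _ ≤ ‖B‖ * (‖B‖ ^ l * s ^ l / (Nat.factorial l)) := by
            exact mul_le_mul_of_nonneg_left (ih s hs.1.le) (norm_nonneg _)
        _ = ‖B‖ ^ (l+1) * s ^ l / (Nat.factorial l) := by ring
    calc ‖∫ s in (0:ℝ)..t, exp ((t - s) • A) * B * remainderIntegral A B l s‖
        ≤ |∫ s in (0:ℝ)..t, ‖B‖ ^ (l+1) * s ^ l / (Nat.factorial l)| :=
          (intervalIntegral.norm_integral_le_of_norm_le ht
            (by rw [← Set.uIoc_of_le ht]; exact (ae_restrict_iff' measurableSet_uIoc).mp hbd)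
            hg).trans (le_abs_self _)
      _ = ‖B‖ ^ (l+1) * t ^ (l+1) / (Nat.factorial (l+1)) := by
          have : ∀ s : ℝ, ‖B‖ ^ (l+1) * s ^ l / (Nat.factorial l)
              = (‖B‖ ^ (l+1) / (Nat.factorial l)) * s ^ l := fun s => by ring
          simp_rw [this, intervalIntegral.integral_const_mul, integral_pow]
          rw [zero_pow (Nat.succ_ne_zero l), sub_zero, abs_of_nonneg (by positivity),
            Nat.factorial_succ]
          have h1 : (Nat.factorial l : ℝ) ≠ 0 := hfac.ne'
          have h2 : ((l : ℝ) + 1) ≠ 0 := by positivity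
          push_cast
          field_simp

/-- If `A` and `B` are anti-Hermitian, then the remainder
`R_p(A,B) = ∫₀¹∫₀^{s₁}⋯∫₀^{s_{p-1}} e^{A(1-s₁)} B e^{A(s₁-s₂)} B ⋯ e^{A(s_{p-1}-s_p)} B e^{(A+B)s_p} ds_p⋯ds₁`
satisfies `‖R_p(A,B)‖ ≤ ‖B‖^p / p!` in the spectral norm. -/
theorem remainder_bound {N : ℕ} (A B : Matrix (Fin N) (Fin N) ℂ)
    (hA : Aᴴ = -A) (hB : Bᴴ = -B) (p : ℕ) (hp : 1 ≤ p) :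
    ‖remainderIntegral A B p 1‖ ≤ ‖B‖ ^ p / (Nat.factorial p) := by
  have := key A B hA hB p 1 zero_le_one
  simpa using this
end

section
/- Let A and B be anti-Hermitian matrices. Then for any positive integer p, e^{A+B} = e^A + Σ_{l=1}^{p-1} ∫₀¹∫₀^{s₁}⋯∫₀^{s_{l-1}} e^{A(1-s₁)} B e^{A(s₁-s₂)} B ⋯ e^{A(s_{l-1}-s_l)} B e^{A s_l} ds_l⋯ds₁ + R_p(A,B), where ‖R_p(A,B)‖ ≤ ‖B‖^p / p!. -/
open scoped Matrix Matrix.Norms.L2Operator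
open MeasureTheory NormedSpace

/-- The nested iterated integral ending with the unperturbed propagator `e^{A s}`:
`dysonTerm A B l 1` equals
`∫₀¹∫₀^{s₁}⋯∫₀^{s_{l-1}} e^{A(1-s₁)} B e^{A(s₁-s₂)} B ⋯ e^{A(s_{l-1}-s_l)} B e^{A s_l} ds_l⋯ds₁`. -/
noncomputable def dysonTerm {N : ℕ} (A B : Matrix (Fin N) (Fin N) ℂ) :
    ℕ → ℝ → Matrix (Fin N) (Fin N) ℂ
  | 0, t => exp (t • A)
  | (l + 1), t => ∫ s in (0:ℝ)..t, exp ((t - s) • A) * B * dysonTerm A B l s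

namespace HOVP

variable {N : ℕ} (A B : Matrix (Fin N) (Fin N) ℂ)

noncomputable instance instNormedAlgebraRatMatrix : NormedAlgebra ℚ (Matrix (Fin N) (Fin N) ℂ) :=
  NormedAlgebra.restrictScalars ℚ ℂ _

lemma rem_zero (t : ℝ) : remainderIntegral A B 0 t = exp (t • (A + B)) := rfl

lemma rem_succ (l : ℕ) (t : ℝ) : remainderIntegral A B (l + 1) t =
    ∫ s in (0:ℝ)..t, exp ((t - s) • A) * B * remainderIntegral A B l s := rfl

lemma dyson_zero (t : ℝ) : dysonTerm A B 0 t = exp (t • A) := rfl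

lemma dyson_succ (l : ℕ) (t : ℝ) : dysonTerm A B (l + 1) t =
    ∫ s in (0:ℝ)..t, exp ((t - s) • A) * B * dysonTerm A B l s := rfl

lemma expA_cont : Continuous fun t : ℝ => exp (t • A) :=
  exp_continuous.comp (continuous_id.smul continuous_const)

lemma comm_smul (t s : ℝ) : Commute (t • A) (s • A) :=
  ((Commute.refl A).smul_left t).smul_right s

lemma exp_split (t s : ℝ) :
    exp ((t - s) • A) = exp (t • A) * exp ((-s) • A) := by
  rw [sub_eq_add_neg, add_smul, exp_add_of_commute (comm_smul A t (-s))]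

lemma exp_mul_exp_neg (t : ℝ) : exp (t • A) * exp ((-t) • A) = 1 := by
  rw [← exp_add_of_commute (comm_smul A t (-t)), ← add_smul, add_neg_cancel, zero_smul, exp_zero]

lemma aux_eq {f : ℝ → Matrix (Fin N) (Fin N) ℂ} (hf : Continuous f) (t : ℝ) :
    (∫ s in (0:ℝ)..t, exp ((t - s) • A) * B * f s)
      = exp (t • A) * ∫ s in (0:ℝ)..t, exp ((-s) • A) * B * f s := by
  have h1 : ∀ s : ℝ, exp ((t - s) • A) * B * f s
      = exp (t • A) * (exp ((-s) • A) * B * f s) := fun s => by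
    rw [exp_split A t s]; simp [mul_assoc]
  have hint : IntervalIntegrable (fun s : ℝ => exp ((-s) • A) * B * f s) volume 0 t :=
    ((((expA_cont A).comp continuous_neg).mul continuous_const).mul hf).intervalIntegrable 0 t
  simp_rw [h1]
  exact (ContinuousLinearMap.mul ℝ (Matrix (Fin N) (Fin N) ℂ) (exp (t • A))).intervalIntegral_comp_comm hint

lemma aux_cont {f : ℝ → Matrix (Fin N) (Fin N) ℂ} (hf : Continuous f) :
    Continuous fun t : ℝ => ∫ s in (0:ℝ)..t, exp ((t - s) • A) * B * f s := by
  simp_rw [aux_eq A B hf]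
  exact (expA_cont A).mul (intervalIntegral.continuous_primitive
    (fun a b => ((((expA_cont A).comp continuous_neg).mul continuous_const).mul
      hf).intervalIntegrable a b) 0)

lemma cont_rem : ∀ l, Continuous fun t : ℝ => remainderIntegral A B l t
  | 0 => exp_continuous.comp (continuous_id.smul continuous_const)
  | (l + 1) => by
      simp_rw [rem_succ A B l]
      exact aux_cont A B (cont_rem l)

lemma cont_dyson : ∀ l, Continuous fun t : ℝ => dysonTerm A B l t
  | 0 => expA_cont A
  | (l + 1) => by
      simp_rw [dyson_succ A B l]
      exact aux_cont A B (cont_dyson l)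

lemma duhamel (t : ℝ) :
    exp (t • (A + B)) = exp (t • A) +
      ∫ s in (0:ℝ)..t, exp ((t - s) • A) * B * exp (s • (A + B)) := by
  set f' : ℝ → Matrix (Fin N) (Fin N) ℂ :=
    fun s => exp ((-s) • A) * B * exp (s • (A + B)) with hf'
  have hderiv : ∀ s : ℝ, HasDerivAt
      (fun u : ℝ => exp ((-u) • A) * exp (u • (A + B))) (f' s) s := by
    intro s
    have hexp : HasDerivAt (fun u : ℝ => exp (u • A)) (exp ((-s) • A) * A) (-s) := by
      exact hasDerivAt_exp_smul_const A (-s)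
    have h1 : HasDerivAt (fun u : ℝ => exp ((-u) • A)) (-(exp ((-s) • A) * A)) s := by
      have := HasDerivAt.scomp s hexp (hasDerivAt_neg s)
      simpa [Function.comp_def, neg_smul] using this
    have h2 : HasDerivAt (fun u : ℝ => exp (u • (A + B)))
        ((A + B) * exp (s • (A + B))) s := by
      exact hasDerivAt_exp_smul_const' (A + B) s
    have := h1.mul h2
    refine this.congr_deriv ?_
    simp only [hf']
    noncomm_ring
  have hcontAB : Continuous fun s : ℝ => exp (s • (A + B)) :=
    exp_continuous.comp (continuous_id.smul continuous_const)
  have hcont : Continuous f' :=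
    (((expA_cont A).comp continuous_neg).mul continuous_const).mul hcontAB
  have hFTC := intervalIntegral.integral_eq_sub_of_hasDerivAt
    (f := fun u : ℝ => exp ((-u) • A) * exp (u • (A + B)))
    (a := 0) (b := t) (fun s _ => hderiv s) (hcont.intervalIntegrable 0 t)
  rw [aux_eq A B hcontAB t, hFTC]
  simp only [neg_zero, zero_smul, exp_zero, one_mul]
  rw [mul_sub, ← mul_assoc, exp_mul_exp_neg A t, one_mul, mul_one]
  abel

lemma step : ∀ l (t : ℝ), remainderIntegral A B l t
    = dysonTerm A B l t + remainderIntegral A B (l + 1) t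
  | 0, t => by
      rw [rem_zero, dyson_zero, rem_succ]
      simp_rw [rem_zero]
      exact duhamel A B t
  | (l + 1), t => by
      rw [rem_succ, rem_succ, dyson_succ]
      have h1 : ∀ s : ℝ, exp ((t - s) • A) * B * remainderIntegral A B l s
          = exp ((t - s) • A) * B * dysonTerm A B l s
            + exp ((t - s) • A) * B * remainderIntegral A B (l + 1) s := fun s => by
        rw [step l s, mul_add]
      have he : Continuous fun s : ℝ => exp ((t - s) • A) :=
        (expA_cont A).comp (continuous_const.sub continuous_id)
      have i1 : IntervalIntegrable
          (fun s : ℝ => exp ((t - s) • A) * B * dysonTerm A B l s) volume 0 t :=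
        ((he.mul continuous_const).mul (cont_dyson A B l)).intervalIntegrable 0 t
      have i2 : IntervalIntegrable
          (fun s : ℝ => exp ((t - s) • A) * B * remainderIntegral A B (l + 1) s) volume 0 t :=
        ((he.mul continuous_const).mul (cont_rem A B (l + 1))).intervalIntegrable 0 t
      calc (∫ s in (0:ℝ)..t, exp ((t - s) • A) * B * remainderIntegral A B l s)
          = ∫ s in (0:ℝ)..t, (exp ((t - s) • A) * B * dysonTerm A B l s
              + exp ((t - s) • A) * B * remainderIntegral A B (l + 1) s) := by
            exact intervalIntegral.integral_congr fun s _ => h1 s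
        _ = (∫ s in (0:ℝ)..t, exp ((t - s) • A) * B * dysonTerm A B l s)
              + ∫ s in (0:ℝ)..t, exp ((t - s) • A) * B * remainderIntegral A B (l + 1) s :=
            intervalIntegral.integral_add i1 i2

lemma telescope : ∀ p : ℕ, exp ((1:ℝ) • (A + B))
    = (∑ l ∈ Finset.range p, dysonTerm A B l 1) + remainderIntegral A B p 1
  | 0 => by simp [rem_zero]
  | (p + 1) => by
      rw [telescope p, step A B p 1, Finset.sum_range_succ]
      abel

lemma matrix_norm_one_le : ‖(1 : Matrix (Fin N) (Fin N) ℂ)‖ ≤ 1 := by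
  rw [Matrix.cstar_norm_def, map_one, ContinuousLinearMap.one_def]
  exact ContinuousLinearMap.norm_id_le

lemma exp_skew_norm (M : Matrix (Fin N) (Fin N) ℂ) (hM : Mᴴ = -M) : ‖exp M‖ ≤ 1 := by
  have h1 : (exp M)ᴴ * exp M = 1 := by
    rw [← Matrix.exp_conjTranspose, hM,
      ← exp_add_of_commute ((Commute.refl M).neg_left), neg_add_cancel, exp_zero]
  have h2 : ‖exp M‖ * ‖exp M‖ = ‖(1 : Matrix (Fin N) (Fin N) ℂ)‖ := by
    rw [← CStarRing.norm_star_mul_self, Matrix.star_eq_conjTranspose, h1]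
  nlinarith [norm_nonneg (exp M), matrix_norm_one_le (N := N)]

lemma smul_skew {M : Matrix (Fin N) (Fin N) ℂ} (hM : Mᴴ = -M) (t : ℝ) :
    (t • M)ᴴ = -(t • M) := by
  rw [Matrix.conjTranspose_smul, hM, star_trivial, smul_neg]

lemma bound (hA : Aᴴ = -A) (hB : Bᴴ = -B) :
    ∀ l, ∀ t : ℝ, 0 ≤ t →
      ‖remainderIntegral A B l t‖ ≤ ‖B‖ ^ l * t ^ l / (Nat.factorial l)
  | 0, t, ht => by
      simp only [rem_zero, pow_zero, Nat.factorial_zero, Nat.cast_one, one_mul, div_one]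
      exact exp_skew_norm _ (smul_skew (by rw [Matrix.conjTranspose_add, hA, hB]; abel) t)
  | (l + 1), t, ht => by
      rw [rem_succ]
      have he : Continuous fun s : ℝ => exp ((t - s) • A) :=
        (expA_cont A).comp (continuous_const.sub continuous_id)
      have hcont : Continuous fun s : ℝ =>
          exp ((t - s) • A) * B * remainderIntegral A B l s :=
        (he.mul continuous_const).mul (cont_rem A B l)
      have hmono : ∀ s ∈ Set.Icc (0:ℝ) t,
          ‖exp ((t - s) • A) * B * remainderIntegral A B l s‖
            ≤ ‖B‖ ^ (l + 1) * s ^ l / (Nat.factorial l) := by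
        intro s hs
        have hb := bound hA hB l s hs.1
        have hexp : ‖exp ((t - s) • A)‖ ≤ 1 :=
          exp_skew_norm _ (smul_skew hA (t - s))
        calc ‖exp ((t - s) • A) * B * remainderIntegral A B l s‖
            ≤ ‖exp ((t - s) • A) * B‖ * ‖remainderIntegral A B l s‖ := norm_mul_le _ _
          _ ≤ (‖exp ((t - s) • A)‖ * ‖B‖) * ‖remainderIntegral A B l s‖ :=
              mul_le_mul_of_nonneg_right (norm_mul_le _ _) (norm_nonneg _)
          _ ≤ (1 * ‖B‖) * (‖B‖ ^ l * s ^ l / (Nat.factorial l)) := by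
              apply mul_le_mul (mul_le_mul_of_nonneg_right hexp (norm_nonneg _)) hb
                (norm_nonneg _) (by positivity)
          _ = ‖B‖ ^ (l + 1) * s ^ l / (Nat.factorial l) := by ring
      calc ‖∫ s in (0:ℝ)..t, exp ((t - s) • A) * B * remainderIntegral A B l s‖
          ≤ ∫ s in (0:ℝ)..t, ‖exp ((t - s) • A) * B * remainderIntegral A B l s‖ :=
            intervalIntegral.norm_integral_le_integral_norm ht
        _ ≤ ∫ s in (0:ℝ)..t, ‖B‖ ^ (l + 1) * s ^ l / (Nat.factorial l) := by
            apply intervalIntegral.integral_mono_on ht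
              (hcont.norm.intervalIntegrable 0 t)
              ((Continuous.intervalIntegrable (by continuity) 0 t)) hmono
        _ = ‖B‖ ^ (l + 1) * t ^ (l + 1) / (Nat.factorial (l + 1)) := by
            have hrw : ∀ s : ℝ, ‖B‖ ^ (l + 1) * s ^ l / (Nat.factorial l)
                = (‖B‖ ^ (l + 1) / (Nat.factorial l)) * s ^ l := fun s => by ring
            simp_rw [hrw]
            rw [intervalIntegral.integral_const_mul, integral_pow]
            have hfac : ((Nat.factorial (l + 1) : ℝ)) = (l + 1) * (Nat.factorial l) := by
              push_cast [Nat.factorial_succ]; ring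
            rw [hfac]
            have h1 : (Nat.factorial l : ℝ) ≠ 0 := by positivity
            have h2 : ((l : ℝ) + 1) ≠ 0 := by positivity
            rw [zero_pow (Nat.succ_ne_zero l), sub_zero]
            field_simp

end HOVP

/-- **High-order variation-of-parameters formula.**
For anti-Hermitian matrices `A, B` and any positive integer `p`,
`e^{A+B} = e^A + Σ_{l=1}^{p-1} ∫₀¹⋯∫₀^{s_{l-1}} e^{A(1-s₁)} B ⋯ B e^{A s_l} ds + R_p(A,B)`
with `‖R_p(A,B)‖ ≤ ‖B‖^p / p!` in the spectral norm. -/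
theorem high_order_variation_of_parameters {N : ℕ} (A B : Matrix (Fin N) (Fin N) ℂ)
    (hA : Aᴴ = -A) (hB : Bᴴ = -B) (p : ℕ) (hp : 1 ≤ p) :
    exp (A + B) =
        exp A + (∑ l ∈ Finset.Icc 1 (p - 1), dysonTerm A B l 1) + remainderIntegral A B p 1
      ∧ ‖remainderIntegral A B p 1‖ ≤ ‖B‖ ^ p / (Nat.factorial p) := by
  constructor
  · have tel := HOVP.telescope A B p
    rw [one_smul] at tel
    have hr : Finset.range p = insert 0 (Finset.Icc 1 (p - 1)) := by
      ext x; simp [Finset.mem_range, Finset.mem_Icc]; omega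
    rw [hr, Finset.sum_insert (by simp)] at tel
    rw [tel, HOVP.dyson_zero, one_smul]
  · have := HOVP.bound A B hA hB p 1 zero_le_one
    simpa using this
end
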